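/- Adversary lower bound for segments attached to a line: for every k ≥ 1 and every on-line coloring algorithm A, the adversary has a strategy S_k producing a finite family of segments in the closed upper half-plane, each with one endpoint on the horizontal line h, with clique number at most 2 (no three pairwise intersecting segments), together with a vertical line v such that: (1) any two segments pierced by v are disjoint, (2) every segment pierced by v is attached to h strictly right of v, and (3) A uses at least k distinct colors on the segments pierced by v. In particular, no on-line algorithm colors triangle-free intersection graphs of segments attached to a line with a bounded number of colors. -/

import Mathlib

open Set

set_option maxHeartbeats 4000000

/-- A segment, given by its two endpoints in the plane. -/
abbrev Seg : Type := (ℝ × ℝ) × (ℝ × ℝ)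

/-- The set of points of a segment. -/
def segSet (s : Seg) : Set (ℝ × ℝ) := segment ℝ s.1 s.2

/-- A segment attached to the horizontal line y = 0, lying in the closed upper
half-plane: its first endpoint is on the line. -/
def Attached (s : Seg) : Prop := s.1.2 = 0 ∧ 0 ≤ s.2.2

/-- The vertical line at x-coordinate v pierces the segment s: it meets its relative
interior. -/
def Pierces (v : ℝ) (s : Seg) : Prop := ∃ p ∈ openSegment ℝ s.1 s.2, p.1 = v

/-- An on-line algorithm A (assigning a color to the last segment of each presented
prefix) is proper if it assigns distinct colors to intersecting segments. -/
def ProperOnline (A : List Seg → ℕ) : Prop :=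
  ∀ l : List Seg, ∀ i j : Fin l.length, i ≠ j →
    (segSet (l.get i) ∩ segSet (l.get j)).Nonempty →
    A (l.take ((i : ℕ) + 1)) ≠ A (l.take ((j : ℕ) + 1))

namespace Stmt11

/-- extract parametric data of a point on an attached segment -/
lemma seg_pt_data {s : Seg} (h0 : s.1.2 = 0) {pt : ℝ × ℝ} (hpt : pt ∈ segSet s) :
    ∃ t : ℝ, 0 ≤ t ∧ t ≤ 1 ∧ pt.1 = s.1.1 + t * (s.2.1 - s.1.1) ∧ pt.2 = t * s.2.2 := by
  rw [segSet, segment_eq_image'] at hpt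
  obtain ⟨t, ht, heq⟩ := hpt
  refine ⟨t, ht.1, ht.2, ?_, ?_⟩
  · have := congrArg Prod.fst heq
    simp at this
    rw [← this]
  · have := congrArg Prod.snd heq
    simp [h0] at this
    rw [← this]

lemma seg_pt_mk {s : Seg} (h0 : s.1.2 = 0) {t : ℝ} (h1 : 0 ≤ t) (h2 : t ≤ 1) :
    (s.1.1 + t * (s.2.1 - s.1.1), t * s.2.2) ∈ segSet s := by
  rw [segSet, segment_eq_image']
  refine ⟨t, ⟨h1, h2⟩, ?_⟩
  apply Prod.ext <;> simp [h0] <;> ring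

lemma seg_pt_bounds {s : Seg} (h0 : s.1.2 = 0) (hlt : s.2.1 < s.1.1) (hy : 0 ≤ s.2.2)
    {pt : ℝ × ℝ} (hpt : pt ∈ segSet s) :
    s.2.1 ≤ pt.1 ∧ pt.1 ≤ s.1.1 ∧ 0 ≤ pt.2 ∧ pt.2 ≤ s.2.2 ∧
    pt.2 * (s.1.1 - s.2.1) = s.2.2 * (s.1.1 - pt.1) := by
  obtain ⟨t, ht0, ht1, hx, hy2⟩ := seg_pt_data h0 hpt
  refine ⟨by nlinarith, by nlinarith, by nlinarith, by nlinarith, by rw [hx, hy2]; ring⟩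

lemma mem_attach (s : Seg) : s.1 ∈ segSet s := left_mem_segment ℝ s.1 s.2
lemma mem_top (s : Seg) : s.2 ∈ segSet s := right_mem_segment ℝ s.1 s.2

lemma pierces_intro {s : Seg} {v : ℝ} (h1 : s.2.1 < v) (h2 : v < s.1.1) : Pierces v s := by
  have hd : 0 < s.1.1 - s.2.1 := by linarith
  set t : ℝ := (s.1.1 - v) / (s.1.1 - s.2.1) with ht
  have ht0 : 0 < t := div_pos (by linarith) hd
  have ht1 : t < 1 := (div_lt_one hd).mpr (by linarith)
  refine ⟨s.1 + t • (s.2 - s.1), ?_, ?_⟩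
  · rw [openSegment_eq_image']
    exact ⟨t, ⟨ht0, ht1⟩, rfl⟩
  · simp [ht]
    field_simp
    ring

lemma pierces_pt {s : Seg} {v : ℝ} (h : Pierces v s) : ∃ pt ∈ segSet s, pt.1 = v := by
  obtain ⟨pt, hm, he⟩ := h
  exact ⟨pt, openSegment_subset_segment ℝ s.1 s.2 hm, he⟩

lemma not_pierces {s : Seg} {v : ℝ} (h : ∀ pt ∈ segSet s, v < pt.1) : ¬ Pierces v s := by
  rintro hp
  obtain ⟨pt, hm, he⟩ := pierces_pt hp
  have := h pt hm
  rw [he] at this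
  exact lt_irrefl v this

/-- Two attached segments cross: S has top (tS,hS) and attach (aS,0); D has top (tD,hD),
attach (aD,0). -/
lemma seg_cross {aS tS hS aD tD hD : ℝ}
    (h1 : 0 < hS) (h2 : 0 < hD) (h3 : tD < tS) (h4 : tS < aD) (h5 : aD < aS)
    (h6 : hS * (aD - tD) < hD * (aD - tS)) :
    (segSet ((aS, 0), (tS, hS)) ∩ segSet ((aD, 0), (tD, hD))).Nonempty := by
  set g : ℝ → ℝ := fun x => hD * (aD - x) * (aS - tS) - hS * (aS - x) * (aD - tD) with hg
  have hgc : ContinuousOn g (Icc tS aD) := by fun_prop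
  have hga : 0 < g tS := by simp only [hg]; nlinarith
  have hgb : g aD < 0 := by simp only [hg]; nlinarith [mul_pos h1 (by linarith : (0:ℝ) < aS - aD)]
  obtain ⟨x, hx, hgx⟩ := intermediate_value_Icc' (le_of_lt h4) hgc ⟨le_of_lt hgb, le_of_lt hga⟩
  have hxS : tS ≤ x := hx.1
  have hxD : x ≤ aD := hx.2
  have hAS : 0 < aS - tS := by linarith
  have hAD : 0 < aD - tD := by linarith
  -- the point
  refine ⟨(x, hS * (aS - x) / (aS - tS)), ?_, ?_⟩
  · have hmem := seg_pt_mk (s := ((aS, 0), (tS, hS))) rfl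
      (t := (aS - x) / (aS - tS)) (div_nonneg (by linarith) (le_of_lt hAS))
      (by rw [div_le_one hAS]; linarith)
    simp only at hmem
    convert hmem using 2
    · field_simp; ring
    · field_simp
  · have hmem := seg_pt_mk (s := ((aD, 0), (tD, hD))) rfl
      (t := (aD - x) / (aD - tD)) (div_nonneg (by linarith) (le_of_lt hAD))
      (by rw [div_le_one hAD]; linarith)
    simp only at hmem
    convert hmem using 2
    · field_simp; ring
    · -- hS*(aS-x)/(aS-tS) = (aD-x)/(aD-tD) * hD  using g x = 0
      have h0 : hD * (aD - x) * (aS - tS) = hS * (aS - x) * (aD - tD) := by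
        have := hgx; simp only [hg] at this; linarith
      field_simp
      nlinarith [h0]

/-- the constant sequence -/
noncomputable def Qf : ℕ → ℝ
  | 0 => 4
  | (k+1) => 100 * (Qf k)^4

lemma Qf_ge (k : ℕ) : 4 ≤ Qf k := by
  induction k with
  | zero => simp [Qf]
  | succ k ih =>
    show (4:ℝ) ≤ 100 * (Qf k)^4
    have h2 : (4:ℝ)^4 ≤ (Qf k)^4 := pow_le_pow_left₀ (by norm_num) ih 4
    norm_num at h2 ⊢
    linarith

lemma Qf_pos (k : ℕ) : 0 < Qf k := lt_of_lt_of_le (by norm_num) (Qf_ge k)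

/-- the set of colors A uses on the segments of l pierced by v, in context pre -/
def colSet (A : List Seg → ℕ) (pre l : List Seg) (v : ℝ) : Set ℕ :=
  {γ : ℕ | ∃ i : Fin l.length, Pierces v (l.get i) ∧
    A ((pre ++ l).take (pre.length + (i : ℕ) + 1)) = γ}

lemma colSet_finite (A : List Seg → ℕ) (pre l : List Seg) (v : ℝ) :
    (colSet A pre l v).Finite := by
  apply (Set.finite_range (fun i : Fin l.length =>
    A ((pre ++ l).take (pre.length + (i : ℕ) + 1)))).subset
  rintro γ ⟨i, _, h⟩
  exact ⟨i, h⟩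

lemma colSet_mono_left {A : List Seg → ℕ} (pre l1 rest : List Seg) {v v2 : ℝ}
    (hP : ∀ s ∈ l1, Pierces v s → Pierces v2 s) :
    colSet A pre l1 v ⊆ colSet A pre (l1 ++ rest) v2 := by
  rintro γ ⟨i, hpi, hAi⟩
  have hlen : (i : ℕ) < (l1 ++ rest).length := by
    simp only [List.length_append]; omega
  refine ⟨⟨(i : ℕ), hlen⟩, ?_, ?_⟩
  · have hget : (l1 ++ rest).get ⟨(i : ℕ), hlen⟩ = l1.get i := by
      simp [List.getElem_append_left i.isLt]
    rw [hget]
    exact hP _ (l1.get_mem i) hpi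
  · have htake : (pre ++ (l1 ++ rest)).take (pre.length + (i : ℕ) + 1)
        = (pre ++ l1).take (pre.length + (i : ℕ) + 1) := by
      rw [← List.append_assoc]
      exact List.take_append_of_le_length (by simp [List.length_append])
    simpa [htake] using hAi

lemma colSet_mono_right {A : List Seg → ℕ} (pre l1 l2 : List Seg) {v v2 : ℝ}
    (hP : ∀ s ∈ l2, Pierces v s → Pierces v2 s) :
    colSet A (pre ++ l1) l2 v ⊆ colSet A pre (l1 ++ l2) v2 := by
  rintro γ ⟨i, hpi, hAi⟩
  have hlen : l1.length + (i : ℕ) < (l1 ++ l2).length := by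
    simp only [List.length_append]; omega
  refine ⟨⟨l1.length + (i : ℕ), hlen⟩, ?_, ?_⟩
  · have hget : (l1 ++ l2).get ⟨l1.length + (i : ℕ), hlen⟩ = l2.get i := by
      simp [List.getElem_append_right (by omega : l1.length ≤ l1.length + (i:ℕ))]
    rw [hget]
    exact hP _ (l2.get_mem i) hpi
  · have hl : pre ++ (l1 ++ l2) = (pre ++ l1) ++ l2 := by rw [List.append_assoc]
    have harith : pre.length + (l1.length + (i : ℕ)) + 1 = (pre ++ l1).length + (i : ℕ) + 1 := by
      simp [List.length_append]; omega
    rw [hl, harith]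
    exact hAi

lemma nonempty_segSet (s : Seg) : (segSet s).Nonempty := ⟨s.1, mem_attach s⟩

lemma ne_of_disj {s t : Seg} (h : Disjoint (segSet s) (segSet t)) : s ≠ t := by
  intro he
  subst he
  obtain ⟨pt, hpt⟩ := nonempty_segSet s
  exact Set.disjoint_left.mp h hpt hpt

lemma not_inter_of_disj {s t : Seg} (h : Disjoint (segSet s) (segSet t)) :
    ¬ (segSet s ∩ segSet t).Nonempty := by
  rw [Set.disjoint_iff_inter_eq_empty] at h
  rw [h]
  exact Set.not_nonempty_empty

lemma getL {x rest : List Seg} {i : ℕ} (h : i < x.length)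
    (hh : i < (x ++ rest).length) :
    (x ++ rest).get ⟨i, hh⟩ = x.get ⟨i, h⟩ := by
  rw [List.get_eq_getElem, List.get_eq_getElem]
  exact List.getElem_append_left h

lemma getR {x y : List Seg} {i : ℕ} (h : i < y.length)
    (hh : x.length + i < (x ++ y).length) :
    (x ++ y).get ⟨x.length + i, hh⟩ = y.get ⟨i, h⟩ := by
  rw [List.get_eq_getElem, List.get_eq_getElem]
  rw [List.getElem_append_right (Nat.le_add_right x.length i)]
  simp

structure Good (A : List Seg → ℕ) (k : ℕ) (pre : List Seg) (p b c e : ℝ)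
    (l : List Seg) (z1 z2 v : ℝ) : Prop where
  hpz1 : p < z1
  hz12 : z1 < z2
  hz2b : z2 < b
  hvz1 : z1 < v
  hvz2 : v < z2
  shape : ∀ s ∈ l, s.1.2 = 0 ∧ 0 < s.2.2 ∧ s.2.1 < s.1.1
  region : ∀ s ∈ l, ∀ pt ∈ segSet s, p < pt.1 ∧ pt.1 < b ∧ 0 ≤ pt.2 ∧ pt.2 < e
  height : ∀ s ∈ l, ∀ pt ∈ segSet s, pt.1 ≤ z2 → c < pt.2
  ptop : ∀ s ∈ l, Pierces v s →
      s.2.1 ≤ z1 ∧ z1 - s.2.1 ≤ Qf k * (z2 - z1) ∧ z2 < s.1.1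
  npx : ∀ s ∈ l, ¬ Pierces v s → ∀ pt ∈ segSet s, z2 < pt.1
  nodup : l.Nodup
  pdisj : ∀ s ∈ l, ∀ t ∈ l, s ≠ t → Pierces v s → Pierces v t →
      Disjoint (segSet s) (segSet t)
  tfree : ∀ s ∈ l, ∀ t ∈ l, ∀ u ∈ l, s ≠ t → s ≠ u → t ≠ u →
      ¬ ((segSet s ∩ segSet t).Nonempty ∧ (segSet s ∩ segSet u).Nonempty ∧
         (segSet t ∩ segSet u).Nonempty)
  width : b - p ≤ Qf k * (z2 - z1)
  colors : k ≤ (colSet A pre l v).ncard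

theorem main (k : ℕ) (A : List Seg → ℕ) (hA : ProperOnline A) :
    ∀ (pre : List Seg) (p b c e : ℝ), p < b → 0 < c → c * Qf k ≤ e →
    ∃ l z1 z2 v, Good A k pre p b c e l z1 z2 v := by
  induction k with
  | zero =>
    intro pre p b c e hpb hc hce
    refine ⟨[], p + (b-p)/4, p + (b-p)/2, p + (b-p)*3/8,
      ⟨by linarith, by linarith, by linarith, by linarith, by linarith,
       ?_, ?_, ?_, ?_, ?_, List.nodup_nil, ?_, ?_, ?_, Nat.zero_le _⟩⟩ <;>
      first
        | (intro s hs; exact absurd hs (by simp))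
        | (show b - p ≤ Qf 0 * _; simp only [Qf]; linarith)
  | succ k ih =>
    intro pre p b c e hpb hc hce
    have hQ4 : (4:ℝ) ≤ Qf k := Qf_ge k
    have hQ0 : (0:ℝ) < Qf k := Qf_pos k
    have hQsucc : Qf (k+1) = 100 * (Qf k)^4 := rfl
    obtain ⟨c1, hc1def⟩ : ∃ x : ℝ, x = 9*c*(Qf k)^2 := ⟨_, rfl⟩
    obtain ⟨e1, he1def⟩ : ∃ x : ℝ, x = 9*c*(Qf k)^3 := ⟨_, rfl⟩
    obtain ⟨c2, hc2def⟩ : ∃ x : ℝ, x = 2*c := ⟨_, rfl⟩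
    obtain ⟨e2, he2def⟩ : ∃ x : ℝ, x = 2*c*(Qf k) := ⟨_, rfl⟩
    have hce' : c * Qf (k+1) ≤ e := hce
    have he1e : e1 ≤ e := by
      rw [hQsucc] at hce'
      have : (9:ℝ)*c*(Qf k)^3 ≤ 100*c*(Qf k)^4 := by
        nlinarith [mul_nonneg (mul_nonneg hc.le (pow_nonneg hQ0.le 3)) (by linarith : (0:ℝ) ≤ 100*(Qf k) - 9)]
      linarith
    have hc1e1 : c1 < e1 := by
      rw [hc1def, he1def]
      nlinarith [mul_pos (mul_pos hc (pow_pos hQ0 2)) (by linarith : (0:ℝ) < (Qf k) - 1)]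
    have hcc2 : c < c2 := by rw [hc2def]; nlinarith
    have hc2e2 : c2 < e2 := by
      rw [hc2def, he2def]
      nlinarith [mul_pos hc (by linarith : (0:ℝ) < (Qf k) - 1)]
    have he2c1 : e2 < c1 := by
      rw [he2def, hc1def]
      nlinarith [mul_pos (mul_pos hc hQ0) (by linarith : (0:ℝ) < 9*(Qf k) - 2)]
    -- copy 1
    obtain ⟨l1, z1', z2', v', g1⟩ := ih pre p ((p+b)/2) c1 e1
      (by linarith) (by nlinarith [mul_pos hc (pow_pos hQ0 2)]) (le_of_eq (by rw [hc1def, he1def]; try ring))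
    have hw' : (0:ℝ) < z2' - z1' := by linarith [g1.hz12]
    obtain ⟨p2, hp2def⟩ : ∃ x : ℝ, x = z1' + (z2'-z1')/4 := ⟨_, rfl⟩
    obtain ⟨b2, hb2def⟩ : ∃ x : ℝ, x = z1' + (z2'-z1')/2 := ⟨_, rfl⟩
    have hp2b2 : p2 < b2 := by rw [hp2def, hb2def]; linarith
    -- copy 2
    obtain ⟨l2, z1'', z2'', v'', g2⟩ := ih (pre ++ l1) p2 b2 c2 e2
      hp2b2 (by rw [hc2def]; linarith) (le_of_eq (by rw [hc2def, he2def]; try ring))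
    have hw'' : (0:ℝ) < z2'' - z1'' := by linarith [g2.hz12]
    -- basic order facts
    have hb' : (p+b)/2 < b := by linarith
    have o1 : p < z1' := g1.hpz1
    have o2 : z1' < z2' := g1.hz12
    have o3 : z2' < (p+b)/2 := g1.hz2b
    have o4 : z1' < v' := g1.hvz1
    have o5 : v' < z2' := g1.hvz2
    have o6 : p2 < z1'' := g2.hpz1
    have o7 : z1'' < z2'' := g2.hz12
    have o8 : z2'' < b2 := g2.hz2b
    have o9 : z1'' < v'' := g2.hvz1
    have o10 : v'' < z2'' := g2.hvz2
    have ob2z2' : b2 < z2' := by rw [hb2def]; linarith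
    have op2 : z1' < p2 := by rw [hp2def]; linarith
    -- width relations
    have hwid1 : (b - p)/2 ≤ (Qf k) * (z2'-z1') := by
      have := g1.width
      linarith
    have hwid2 : (z2'-z1')/4 ≤ (Qf k) * (z2''-z1'') := by
      have := g2.width
      rw [hb2def, hp2def] at this
      linarith
    -- piercing transfer within copy 1 for any x with  z1' < x and x < z2'
    have hfwd : ∀ x : ℝ, z1' < x → x < z2' → ∀ s ∈ l1, Pierces v' s → Pierces x s := by
      intro x hx1 hx2 s hs hp
      obtain ⟨ht1, _, ht3⟩ := g1.ptop s hs hp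
      exact pierces_intro (by linarith) (by linarith)
    have hbwd : ∀ x : ℝ, x < z2' → ∀ s ∈ l1, Pierces x s → Pierces v' s := by
      intro x hx2 s hs hp
      by_contra hnp
      obtain ⟨pt, hm, he⟩ := pierces_pt hp
      have h2 := g1.npx s hs hnp pt hm
      rw [he] at h2
      linarith
    -- cross-copy disjointness
    have hcross12 : ∀ s ∈ l1, ∀ t ∈ l2, Disjoint (segSet s) (segSet t) := by
      intro s hs t ht
      rw [Set.disjoint_left]
      intro pt hpts hptt
      have h1 := g2.region t ht pt hptt
      have h2 := g1.height s hs pt hpts (by linarith [h1.2.1])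
      linarith [h1.2.2.2]
    have hne12 : ∀ a ∈ l1, a ∉ l2 := by
      intro a ha hb
      exact ne_of_disj (hcross12 a ha a hb) rfl
    have hQQ : (Qf k) ≤ Qf (k+1) := by
      rw [hQsucc]
      nlinarith [sq_nonneg (Qf k), sq_nonneg ((Qf k)^2)]
    have hbig : 2*(Qf k)*(z2'-z1') ≤ Qf (k+1) * (z2''-z1'') := by
      rw [hQsucc]
      have h1 : 2*(Qf k)*(z2'-z1') ≤ 8*(Qf k)^2*(z2''-z1'') := by
        nlinarith [mul_le_mul_of_nonneg_left hwid2 (by linarith : (0:ℝ) ≤ 2*(Qf k))]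
      have h2 : 8*(Qf k)^2*(z2''-z1'') ≤ 100*(Qf k)^4*(z2''-z1'') := by
        nlinarith [mul_nonneg (mul_nonneg (sq_nonneg (Qf k))
          (by nlinarith : (0:ℝ) ≤ 100*(Qf k)^2 - 8)) hw''.le]
      linarith
    have hupper1 : ∀ s ∈ l1, Pierces v' s → z1'' - s.2.1 ≤ 2*(Qf k)*(z2'-z1') := by
      intro s hs hp
      obtain ⟨t1, t2, t3⟩ := g1.ptop s hs hp
      have h4w : 4*(z2'-z1') ≤ (Qf k)*(z2'-z1') := mul_le_mul_of_nonneg_right hQ4 hw'.le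
      have hz1''b2 : z1'' < z1' + (z2'-z1')/2 := by
        rw [hb2def] at o8; linarith
      linarith
    obtain ⟨C1, hC1def⟩ : ∃ x : Set ℕ, x = colSet A pre l1 v' := ⟨_, rfl⟩
    obtain ⟨C2, hC2def⟩ : ∃ x : Set ℕ, x = colSet A (pre ++ l1) l2 v'' := ⟨_, rfl⟩
    have hC1fin : C1.Finite := hC1def ▸ colSet_finite A pre l1 v'
    have hC2fin : C2.Finite := hC2def ▸ colSet_finite A (pre ++ l1) l2 v''
    have hC1k : k ≤ C1.ncard := hC1def ▸ g1.colors
    have hC2k : k ≤ C2.ncard := hC2def ▸ g2.colors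
    by_cases hcase : k + 1 ≤ (C1 ∪ C2).ncard
    · -- CASE A : answer at v''
      have hfwdA : ∀ s ∈ l1, Pierces v' s → Pierces v'' s :=
        hfwd v'' (by linarith) (by linarith)
      have hbwdA : ∀ s ∈ l1, Pierces v'' s → Pierces v' s :=
        hbwd v'' (by linarith)
      refine ⟨l1 ++ l2, z1'', z2'', v'', ?_, ?_, ?_, ?_, ?_, ?_, ?_, ?_, ?_, ?_, ?_, ?_, ?_, ?_, ?_⟩
      · linarith
      · exact o7
      · linarith
      · exact o9
      · exact o10
      · -- shape
        intro s hs
        rcases List.mem_append.mp hs with h | h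
        exacts [g1.shape s h, g2.shape s h]
      · -- region
        intro s hs pt hpt
        rcases List.mem_append.mp hs with h | h
        · obtain ⟨r1, r2, r3, r4⟩ := g1.region s h pt hpt
          exact ⟨r1, by linarith, r3, by linarith⟩
        · obtain ⟨r1, r2, r3, r4⟩ := g2.region s h pt hpt
          exact ⟨by linarith, by linarith, r3, by linarith⟩
      · -- height
        intro s hs pt hpt hx
        rcases List.mem_append.mp hs with h | h
        · have := g1.height s h pt hpt (by linarith)
          linarith
        · have := g2.height s h pt hpt hx
          linarith
      · -- ptop
        intro s hs hp
        rcases List.mem_append.mp hs with h | h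
        · have hp' := hbwdA s h hp
          obtain ⟨t1, t2, t3⟩ := g1.ptop s h hp'
          refine ⟨by linarith, ?_, by linarith⟩
          have := hupper1 s h hp'
          linarith
        · obtain ⟨t1, t2, t3⟩ := g2.ptop s h hp
          refine ⟨t1, ?_, t3⟩
          nlinarith [mul_le_mul_of_nonneg_right hQQ hw''.le, t2]
      · -- npx
        intro s hs hnp pt hpt
        rcases List.mem_append.mp hs with h | h
        · have hnp' : ¬ Pierces v' s := fun hp => hnp (hfwdA s h hp)
          have := g1.npx s h hnp' pt hpt
          linarith
        · exact g2.npx s h hnp pt hpt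
      · -- nodup
        exact List.nodup_append.mpr ⟨g1.nodup, g2.nodup, fun a ha b hb hab => hne12 a ha (hab ▸ hb)⟩
      · -- pdisj
        intro s hs t ht hst hps hpt
        rcases List.mem_append.mp hs with h1 | h1 <;> rcases List.mem_append.mp ht with h2 | h2
        · exact g1.pdisj s h1 t h2 hst (hbwdA s h1 hps) (hbwdA t h2 hpt)
        · exact hcross12 s h1 t h2
        · exact (hcross12 t h2 s h1).symm
        · exact g2.pdisj s h1 t h2 hst hps hpt
      · -- tfree
        intro s hs t ht u hu hst hsu htu
        rintro ⟨ist, isu, itu⟩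
        rcases List.mem_append.mp hs with h1 | h1 <;> rcases List.mem_append.mp ht with h2 | h2 <;>
          rcases List.mem_append.mp hu with h3 | h3
        · exact g1.tfree s h1 t h2 u h3 hst hsu htu ⟨ist, isu, itu⟩
        · exact not_inter_of_disj (hcross12 t h2 u h3) itu
        · exact not_inter_of_disj (hcross12 s h1 t h2) ist
        · exact not_inter_of_disj (hcross12 s h1 t h2) ist
        · exact not_inter_of_disj (hcross12 t h2 s h1) (by rwa [Set.inter_comm] at ist)
        · exact not_inter_of_disj (hcross12 t h2 u h3) itu
        · exact not_inter_of_disj (hcross12 u h3 s h1) (by rwa [Set.inter_comm] at isu)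
        · exact g2.tfree s h1 t h2 u h3 hst hsu htu ⟨ist, isu, itu⟩
      · -- width
        linarith [hwid1, hbig]
      · -- colors
        have hsub : C1 ∪ C2 ⊆ colSet A pre (l1 ++ l2) v'' := by
          apply Set.union_subset
          · rw [hC1def]
            exact colSet_mono_left pre l1 l2 hfwdA
          · rw [hC2def]
            exact colSet_mono_right (A := A) pre l1 l2 (fun s _ (h : Pierces v'' s) => h)
        exact le_trans hcase (Set.ncard_le_ncard hsub (colSet_finite _ _ _ _))
    · -- CASE B
      -- C1 = C2
      have huk : (C1 ∪ C2).ncard ≤ k := by omega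
      have hufin : (C1 ∪ C2).Finite := hC1fin.union hC2fin
      have hC12 : C1 = C2 := by
        have h1 : C1 = C1 ∪ C2 :=
          Set.eq_of_subset_of_ncard_le Set.subset_union_left (le_trans huk hC1k) hufin
        have h2 : C2 = C1 ∪ C2 :=
          Set.eq_of_subset_of_ncard_le Set.subset_union_right (le_trans huk hC2k) hufin
        rw [h1, ← h2]
      -- the minimum top of pierced segments of copy 2
      obtain ⟨m, hm1, hm2, hm3, hm4⟩ : ∃ m : ℝ,
          (∀ s ∈ l2, Pierces v'' s → m ≤ s.2.1) ∧ m ≤ z1'' ∧ p2 < m ∧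
          z1'' - m ≤ (Qf k) * (z2''-z1'') := by
        classical
        by_cases hP : ∃ s ∈ l2, Pierces v'' s
        · set F : Finset ℝ :=
            ((l2.toFinset.filter (fun s => Pierces v'' s)).image (fun s : Seg => s.2.1)) with hF
          have hFne : F.Nonempty := by
            obtain ⟨s, hs, hp⟩ := hP
            exact ⟨s.2.1, Finset.mem_image.mpr ⟨s, Finset.mem_filter.mpr
              ⟨List.mem_toFinset.mpr hs, hp⟩, rfl⟩⟩
          obtain ⟨s', hs'mem, hs'eq⟩ := Finset.mem_image.mp (F.min'_mem hFne)
          have hs'l2 : s' ∈ l2 := List.mem_toFinset.mp (Finset.mem_filter.mp hs'mem).1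
          have hs'p : Pierces v'' s' := (Finset.mem_filter.mp hs'mem).2
          obtain ⟨u1, u2, u3⟩ := g2.ptop s' hs'l2 hs'p
          have htoppt := g2.region s' hs'l2 s'.2 (mem_top s')
          refine ⟨F.min' hFne, ?_, ?_, ?_, ?_⟩
          · intro s hs hp
            exact F.min'_le s.2.1 (Finset.mem_image.mpr ⟨s, Finset.mem_filter.mpr
              ⟨List.mem_toFinset.mpr hs, hp⟩, rfl⟩)
          · rw [← hs'eq]; exact u1
          · rw [← hs'eq]; exact htoppt.1
          · rw [← hs'eq]; exact u2
        · refine ⟨z1'', fun s hs hp => absurd ⟨s, hs, hp⟩ hP, le_refl _, o6, by nlinarith⟩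
      -- the geometry of the extra segment d
      have hWw' : z2''-z1'' < (z2'-z1')/4 := by
        have := o8
        rw [hb2def] at this
        rw [hp2def] at o6
        linarith
      have hm3' : z1' + (z2'-z1')/4 < m := by rw [hp2def] at hm3; exact hm3
      have hxdgt : z1' < m - (z2''-z1'')/4 := by linarith
      have hx0lt : z1'' + (z2''-z1'')*3/4 < z2'' := by linarith
      have hxdx0 : m - (z2''-z1'')/4 < z1'' + (z2''-z1'')*3/4 := by linarith
      obtain ⟨yd, hydW⟩ : ∃ y : ℝ, y * (3*(z2''-z1'')) =
          4*e2*((z1'' + (z2''-z1'')*3/4) - (m - (z2''-z1'')/4)) :=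
        ⟨4*e2*((z1'' + (z2''-z1'')*3/4) - (m - (z2''-z1'')/4)) / (3*(z2''-z1'')),
          by field_simp⟩
      have he2pos : 0 < e2 := by rw [he2def]; nlinarith only [hc, hQ0]
      have hydpos : 0 < yd := by
        have hXpos : (0:ℝ) < (z1'' + (z2''-z1'')*3/4) - (m - (z2''-z1'')/4) := by linarith
        have h2 : 0 < yd * (3*(z2''-z1'')) := by
          rw [hydW]; exact mul_pos (by linarith) hXpos
        nlinarith only [h2, hw'']
      have hx0xd : (z1'' + (z2''-z1'')*3/4) - (m - (z2''-z1'')/4) ≤ 2*(Qf k)*(z2''-z1'') := by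
        nlinarith only [hm4, hw'', hQ4,
          mul_le_mul_of_nonneg_right (by linarith : (1:ℝ) ≤ Qf k) hw''.le]
      have hydc1 : yd < c1 := by
        have h1 : yd * (3*(z2''-z1'')) ≤ 4*e2*(2*(Qf k)*(z2''-z1'')) := by
          rw [hydW]
          exact mul_le_mul_of_nonneg_left hx0xd (by linarith)
        rw [he2def] at h1
        rw [hc1def]
        nlinarith only [h1, hw'', mul_pos (mul_pos hc (pow_pos hQ0 2)) hw'']
      obtain ⟨d, hddef⟩ : ∃ x : Seg,
          x = ((z1'' + (z2''-z1'')*3/4, (0:ℝ)), (m - (z2''-z1'')/4, yd)) := ⟨_, rfl⟩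
      have hd11 : d.1.1 = z1'' + (z2''-z1'')*3/4 := by rw [hddef]
      have hd12 : d.1.2 = 0 := by rw [hddef]
      have hd21 : d.2.1 = m - (z2''-z1'')/4 := by rw [hddef]
      have hd22 : d.2.2 = yd := by rw [hddef]
      -- basic point bounds for d
      have hdbounds : ∀ pt ∈ segSet d, m - (z2''-z1'')/4 ≤ pt.1 ∧
          pt.1 ≤ z1'' + (z2''-z1'')*3/4 ∧ 0 ≤ pt.2 ∧ pt.2 ≤ yd ∧
          pt.2 * ((z1'' + (z2''-z1'')*3/4) - (m - (z2''-z1'')/4)) =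
            yd * ((z1'' + (z2''-z1'')*3/4) - pt.1) := by
        intro pt hpt
        have h := seg_pt_bounds (s := d) hd12 (by rw [hd21, hd11]; linarith)
          (by rw [hd22]; exact hydpos.le) hpt
        rw [hd11, hd21, hd22] at h
        exact h
      -- d avoids copy 1
      have hd_l1 : ∀ s ∈ l1, Disjoint (segSet s) (segSet d) := by
        intro s hs
        rw [Set.disjoint_left]
        intro pt hpts hptd
        obtain ⟨q1, q2, q3, q4, q5⟩ := hdbounds pt hptd
        have h2 := g1.height s hs pt hpts (by linarith)
        linarith
      -- d avoids unpierced members of copy 2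
      have hd_np2 : ∀ s ∈ l2, ¬ Pierces v'' s → Disjoint (segSet s) (segSet d) := by
        intro s hs hnp
        rw [Set.disjoint_left]
        intro pt hpts hptd
        obtain ⟨q1, q2, q3, q4, q5⟩ := hdbounds pt hptd
        have := g2.npx s hs hnp pt hpts
        linarith
      -- d crosses every pierced member of copy 2
      have hd_cross : ∀ s ∈ l2, Pierces v'' s → (segSet s ∩ segSet d).Nonempty := by
        intro s hs hp
        obtain ⟨w1, w2, w3⟩ := g2.shape s hs
        obtain ⟨u1, u2, u3⟩ := g2.ptop s hs hp
        have hml : m ≤ s.2.1 := hm1 s hs hp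
        have htoppt := g2.region s hs s.2 (mem_top s)
        have hrs : s = ((s.1.1, (0:ℝ)), (s.2.1, s.2.2)) := by rw [← w1]
        rw [hrs, hddef]
        apply seg_cross w2 hydpos (by linarith) (by linarith) (by linarith)
        -- s.2.2 * (x0 - xd) < yd * (x0 - s.2.1)
        -- use: yd*3W = 4e2*(x0-xd), so yd*(x0-z1'') = e2*(x0-xd); and s.2.2 < e2, s.2.1 ≤ z1''
        have hkey : yd * ((z1'' + (z2''-z1'')*3/4) - z1'') =
            e2 * ((z1'' + (z2''-z1'')*3/4) - (m - (z2''-z1'')/4)) := by linarith only [hydW]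
        have hse2 : s.2.2 < e2 := htoppt.2.2.2
        linarith only [hkey,
          mul_le_mul_of_nonneg_left (by linarith : (z1'' + (z2''-z1'')*3/4) - z1''
            ≤ (z1'' + (z2''-z1'')*3/4) - s.2.1) hydpos.le,
          mul_pos (by linarith : (0:ℝ) < (z1'' + (z2''-z1'')*3/4) - (m - (z2''-z1'')/4))
            (by linarith : (0:ℝ) < e2 - s.2.2)]
      -- d is not a member of the copies
      have hd_not1 : d ∉ l1 := fun hd1 => ne_of_disj (hd_l1 d hd1) rfl
      have hd_not2 : d ∉ l2 := by
        intro hd2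
        have h2 := g2.height d hd2 d.1 (mem_attach d) (by rw [show d.1.1 = z1'' + (z2''-z1'')*3/4 from hd11]; linarith)
        rw [hd12] at h2
        linarith
      -- piercing at the new line vB := m - W/8
      have hl1iff : ∀ s ∈ l1, (Pierces (m - (z2''-z1'')/8) s ↔ Pierces v' s) := by
        intro s hs
        constructor
        · exact fun hp => hbwd _ (by linarith) s hs hp
        · exact fun hp => hfwd _ (by linarith) (by linarith) s hs hp
      have hl2np : ∀ s ∈ l2, ¬ Pierces (m - (z2''-z1'')/8) s := by
        intro s hs
        apply not_pierces
        intro pt hpts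
        by_cases hp : Pierces v'' s
        · obtain ⟨w1, w2, w3⟩ := g2.shape s hs
          have := (seg_pt_bounds w1 w3 w2.le hpts).1
          have hml := hm1 s hs hp
          linarith
        · have := g2.npx s hs hp pt hpts
          linarith
      have hdP : Pierces (m - (z2''-z1'')/8) d := by
        exact pierces_intro (by rw [hd21]; linarith) (by rw [hd11]; linarith)
      have hmem : ∀ s ∈ l1 ++ (l2 ++ [d]), s ∈ l1 ∨ s ∈ l2 ∨ s = d := by
        intro s hs
        rcases List.mem_append.mp hs with h | h
        · exact Or.inl h
        rcases List.mem_append.mp h with h | h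
        · exact Or.inr (Or.inl h)
        · exact Or.inr (Or.inr (List.mem_singleton.mp h))
      have hmB : m ≤ b2 := by linarith
      have hmz1' : m - (z2''-z1'')/4 - z1' ≤ (z2'-z1')/2 := by
        rw [hb2def] at hmB
        linarith
      have hbigB : 2*(Qf k)*(z2'-z1') ≤ Qf (k+1) * (3*(z2''-z1'')/16) := by
        rw [hQsucc]
        have hA1 : 2*(Qf k)*(z2'-z1') ≤ 8*(Qf k)^2*(z2''-z1'') := by
          nlinarith only [mul_le_mul_of_nonneg_left hwid2 (by linarith : (0:ℝ) ≤ 8*(Qf k))]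
        have hA2 : 8*(Qf k)^2*(z2''-z1'') ≤ 100*(Qf k)^4*(3*(z2''-z1'')/16) := by
          nlinarith only [mul_nonneg (mul_nonneg (sq_nonneg (Qf k))
              (by nlinarith only [hQ4] : (0:ℝ) ≤ 18*(Qf k)^2 - 8)) hw''.le,
            mul_nonneg (pow_nonneg hQ0.le 4) hw''.le]
        linarith
      have hQs0 : (0:ℝ) < Qf (k+1) := Qf_pos (k+1)
      refine ⟨l1 ++ (l2 ++ [d]), m - (z2''-z1'')/4, m - (z2''-z1'')/16,
        m - (z2''-z1'')/8, ?_, ?_, ?_, ?_, ?_, ?_, ?_, ?_, ?_, ?_, ?_, ?_, ?_, ?_, ?_⟩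
      · linarith
      · linarith
      · linarith
      · linarith
      · linarith
      · -- shape
        intro s hs
        rcases hmem s hs with h | h | h
        · exact g1.shape s h
        · exact g2.shape s h
        · subst h
          exact ⟨hd12, by rw [hd22]; exact hydpos, by rw [hd21, hd11]; linarith⟩
      · -- region
        intro s hs pt hpt
        rcases hmem s hs with h | h | h
        · obtain ⟨r1, r2, r3, r4⟩ := g1.region s h pt hpt
          exact ⟨r1, by linarith, r3, by linarith⟩
        · obtain ⟨r1, r2, r3, r4⟩ := g2.region s h pt hpt
          exact ⟨by linarith, by linarith, r3, by linarith⟩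
        · subst h
          obtain ⟨q1, q2, q3, q4, q5⟩ := hdbounds pt hpt
          exact ⟨by linarith, by linarith, q3, by linarith⟩
      · -- height
        intro s hs pt hpt hx
        rcases hmem s hs with h | h | h
        · have := g1.height s h pt hpt (by linarith)
          linarith
        · have := g2.height s h pt hpt (by linarith)
          linarith
        · subst h
          obtain ⟨q1, q2, q3, q4, q5⟩ := hdbounds pt hpt
          have hXpos : (0:ℝ) < (z1'' + (z2''-z1'')*3/4) - (m - (z2''-z1'')/4) := by linarith
          have h1 : yd * ((z2''-z1'')*3/4) ≤ yd * ((z1'' + (z2''-z1'')*3/4) - pt.1) :=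
            mul_le_mul_of_nonneg_left (by linarith) hydpos.le
          nlinarith only [q5, h1, hydW, mul_pos (by linarith : (0:ℝ) < e2 - c) hXpos,
            hXpos, hcc2, hc2e2]
      · -- ptop
        intro s hs hp
        rcases hmem s hs with h | h | h
        · have hp' := (hl1iff s h).mp hp
          obtain ⟨t1, t2, t3⟩ := g1.ptop s h hp'
          refine ⟨by linarith, ?_, by linarith⟩
          have hu := hupper1 s h hp'
          linarith [hbigB]
        · exact absurd hp (hl2np s h)
        · subst h
          refine ⟨le_of_eq hd21, ?_, by rw [hd11]; linarith⟩
          rw [hd21]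
          nlinarith only [hQs0, hw'']
      · -- npx
        intro s hs hnp pt hpt
        rcases hmem s hs with h | h | h
        · have hnp' : ¬ Pierces v' s := fun hpp => hnp ((hl1iff s h).mpr hpp)
          have := g1.npx s h hnp' pt hpt
          linarith
        · by_cases hp : Pierces v'' s
          · obtain ⟨w1, w2, w3⟩ := g2.shape s h
            have := (seg_pt_bounds w1 w3 w2.le hpt).1
            have hml := hm1 s h hp
            linarith
          · have := g2.npx s h hp pt hpt
            linarith
        · subst h
          exact absurd hdP hnp
      · -- nodup
        refine List.nodup_append.mpr ⟨g1.nodup, ?_, ?_⟩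
        · refine List.nodup_append.mpr ⟨g2.nodup, List.nodup_singleton d, ?_⟩
          intro a ha x hx hax
          rw [List.mem_singleton] at hx
          rw [hax, hx] at ha
          exact hd_not2 ha
        · intro a ha x hmem2 hax
          subst hax
          rcases List.mem_append.mp hmem2 with h | h
          · exact hne12 a ha h
          · rw [List.mem_singleton] at h
            exact hd_not1 (h ▸ ha)
      · -- pdisj
        intro s hs t ht hst hps hpt
        rcases hmem s hs with h1 | h1 | h1
        · rcases hmem t ht with h2 | h2 | h2
          · exact g1.pdisj s h1 t h2 hst ((hl1iff s h1).mp hps) ((hl1iff t h2).mp hpt)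
          · exact absurd hpt (hl2np t h2)
          · subst h2
            exact hd_l1 s h1
        · exact absurd hps (hl2np s h1)
        · subst h1
          rcases hmem t ht with h2 | h2 | h2
          · exact (hd_l1 t h2).symm
          · exact absurd hpt (hl2np t h2)
          · exact absurd h2.symm hst
      · -- tfree
        intro s hs t ht u hu hst hsu htu
        rintro ⟨ist, isu, itu⟩
        have hkill : ∀ x ∈ l1, ∀ y, (y ∈ l2 ∨ y = d) →
            (segSet x ∩ segSet y).Nonempty → False := by
          rintro x hx y (hy | rfl) hint
          · exact not_inter_of_disj (hcross12 x hx y hy) hint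
          · exact not_inter_of_disj (hd_l1 x hx) hint
        have hdint : ∀ y ∈ l2, (segSet y ∩ segSet d).Nonempty → Pierces v'' y := by
          intro y hy hint
          by_contra hnp
          exact not_inter_of_disj (hd_np2 y hy hnp) hint
        rcases hmem s hs with h1 | h1 | h1 <;> rcases hmem t ht with h2 | h2 | h2 <;>
          rcases hmem u hu with h3 | h3 | h3
        · exact g1.tfree s h1 t h2 u h3 hst hsu htu ⟨ist, isu, itu⟩
        · exact hkill t h2 u (Or.inl h3) itu
        · exact hkill t h2 u (Or.inr h3) itu
        · exact hkill s h1 t (Or.inl h2) ist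
        · exact hkill s h1 t (Or.inl h2) ist
        · exact hkill s h1 t (Or.inl h2) ist
        · exact hkill s h1 t (Or.inr h2) ist
        · exact hkill s h1 t (Or.inr h2) ist
        · exact hkill s h1 t (Or.inr h2) ist
        · exact hkill t h2 s (Or.inl h1) (by rwa [Set.inter_comm] at ist)
        · exact hkill t h2 s (Or.inl h1) (by rwa [Set.inter_comm] at ist)
        · exact hkill t h2 s (Or.inl h1) (by rwa [Set.inter_comm] at ist)
        · exact hkill u h3 s (Or.inl h1) (by rwa [Set.inter_comm] at isu)
        · exact g2.tfree s h1 t h2 u h3 hst hsu htu ⟨ist, isu, itu⟩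
        · subst h3
          exact not_inter_of_disj
            (g2.pdisj s h1 t h2 hst (hdint s h1 isu) (hdint t h2 itu)) ist
        · exact hkill u h3 s (Or.inl h1) (by rwa [Set.inter_comm] at isu)
        · subst h2
          exact not_inter_of_disj (g2.pdisj s h1 u h3 hsu (hdint s h1 ist)
            (hdint u h3 (by rwa [Set.inter_comm] at itu))) isu
        · exact htu (h2.trans h3.symm)
        · exact hkill t h2 s (Or.inr h1) (by rwa [Set.inter_comm] at ist)
        · exact hkill t h2 s (Or.inr h1) (by rwa [Set.inter_comm] at ist)
        · exact hkill t h2 s (Or.inr h1) (by rwa [Set.inter_comm] at ist)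
        · exact hkill u h3 s (Or.inr h1) (by rwa [Set.inter_comm] at isu)
        · subst h1
          exact not_inter_of_disj (g2.pdisj t h2 u h3 htu
            (hdint t h2 (by rwa [Set.inter_comm] at ist))
            (hdint u h3 (by rwa [Set.inter_comm] at isu))) itu
        · exact hsu (h1.trans h3.symm)
        · exact hst (h1.trans h2.symm)
        · exact hst (h1.trans h2.symm)
        · exact hst (h1.trans h2.symm)
      · -- width
        linarith only [hwid1, hbigB]
      · -- colors
        have hc1subB : C1 ⊆ colSet A pre (l1 ++ (l2 ++ [d])) (m - (z2''-z1'')/8) := by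
          rw [hC1def]
          exact colSet_mono_left pre l1 (l2 ++ [d]) (fun s hs hp => (hl1iff s hs).mpr hp)
        have hidx : l1.length + (l2.length + 0) < (l1 ++ (l2 ++ [d])).length := by
          simp
        have hgetd : (l1 ++ (l2 ++ [d])).get ⟨l1.length + (l2.length + 0), hidx⟩ = d := by
          rw [getR (by simp : l2.length + 0 < (l2 ++ [d]).length) hidx]
          rw [getR (by simp : (0:ℕ) < [d].length) (by simp : l2.length + 0 < (l2 ++ [d]).length)]
          rfl
        have hcdmem : A (pre ++ (l1 ++ (l2 ++ [d]))) ∈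
            colSet A pre (l1 ++ (l2 ++ [d])) (m - (z2''-z1'')/8) := by
          refine ⟨⟨l1.length + (l2.length + 0), hidx⟩, ?_, ?_⟩
          · rw [hgetd]
            exact hdP
          · have hlen : pre.length + (l1.length + (l2.length + 0)) + 1 =
                (pre ++ (l1 ++ (l2 ++ [d]))).length := by
              simp
              omega
            rw [hlen, List.take_length]
        have hcdC2 : A (pre ++ (l1 ++ (l2 ++ [d]))) ∉ C2 := by
          rw [hC2def]
          rintro ⟨i2, hpi2, hA2⟩
          have hs2 : l2.get i2 ∈ l2 := l2.get_mem i2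
          have hint : (segSet (l2.get i2) ∩ segSet d).Nonempty := hd_cross _ hs2 hpi2
          have hi2 : (i2:ℕ) < l2.length := i2.isLt
          have hiS : pre.length + (l1.length + (i2:ℕ)) < (pre ++ (l1 ++ (l2 ++ [d]))).length := by
            simp only [List.length_append, List.length_singleton]
            omega
          have hiD : pre.length + (l1.length + (l2.length + 0)) <
              (pre ++ (l1 ++ (l2 ++ [d]))).length := by
            simp
          have hgetS : (pre ++ (l1 ++ (l2 ++ [d]))).get ⟨pre.length + (l1.length + (i2:ℕ)), hiS⟩
              = l2.get i2 := by
            rw [getR (show l1.length + (i2:ℕ) < (l1 ++ (l2 ++ [d])).length by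
                  simp only [List.length_append, List.length_singleton]; omega) hiS]
            rw [getR (show (i2:ℕ) < (l2 ++ [d]).length by
                  simp only [List.length_append, List.length_singleton]; omega)]
            rw [getL i2.isLt]
          have hgetD : (pre ++ (l1 ++ (l2 ++ [d]))).get
              ⟨pre.length + (l1.length + (l2.length + 0)), hiD⟩ = d := by
            rw [getR (by simp : l1.length + (l2.length + 0) < (l1 ++ (l2 ++ [d])).length) hiD]
            exact hgetd
          have hne : (⟨pre.length + (l1.length + (i2:ℕ)), hiS⟩ :
              Fin (pre ++ (l1 ++ (l2 ++ [d]))).length) ≠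
              ⟨pre.length + (l1.length + (l2.length + 0)), hiD⟩ := by
            simp only [ne_eq, Fin.mk.injEq]
            omega
          have hAdiff := hA (pre ++ (l1 ++ (l2 ++ [d]))) _ _ hne
            (by rw [hgetS, hgetD]; exact hint)
          apply hAdiff
          have heqL : pre ++ (l1 ++ (l2 ++ [d])) = ((pre ++ l1) ++ l2) ++ [d] := by
            simp [List.append_assoc]
          have htake1 : (pre ++ (l1 ++ (l2 ++ [d]))).take (pre.length + (l1.length + (i2:ℕ)) + 1)
              = ((pre ++ l1) ++ l2).take ((pre ++ l1).length + (i2:ℕ) + 1) := by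
            rw [heqL]
            rw [List.take_append_of_le_length (by
              simp only [List.length_append]
              omega)]
            congr 1
            simp only [List.length_append]
            omega
          have htake2 : (pre ++ (l1 ++ (l2 ++ [d]))).take
              (pre.length + (l1.length + (l2.length + 0)) + 1) = pre ++ (l1 ++ (l2 ++ [d])) := by
            have hlen : pre.length + (l1.length + (l2.length + 0)) + 1 =
                (pre ++ (l1 ++ (l2 ++ [d]))).length := by simp; omega
            rw [hlen, List.take_length]
          show A ((pre ++ (l1 ++ (l2 ++ [d]))).take (pre.length + (l1.length + (i2:ℕ)) + 1)) =
            A ((pre ++ (l1 ++ (l2 ++ [d]))).take (pre.length + (l1.length + (l2.length + 0)) + 1))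
          rw [htake1, htake2, hA2]
        have hcdC1 : A (pre ++ (l1 ++ (l2 ++ [d]))) ∉ C1 := by
          rw [hC12]
          exact hcdC2
        have hins : insert (A (pre ++ (l1 ++ (l2 ++ [d])))) C1 ⊆
            colSet A pre (l1 ++ (l2 ++ [d])) (m - (z2''-z1'')/8) := by
          intro γ hγ
          rcases Set.mem_insert_iff.mp hγ with h | h
          · exact h ▸ hcdmem
          · exact hc1subB h
        have hcount : k + 1 ≤ (insert (A (pre ++ (l1 ++ (l2 ++ [d])))) C1).ncard := by
          rw [Set.ncard_insert_of_notMem hcdC1 hC1fin]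
          omega
        exact le_trans hcount (Set.ncard_le_ncard hins (colSet_finite _ _ _ _))

end Stmt11

/-- Adversary lower bound for segments attached to a line. For every
proper on-line coloring algorithm A and every k there is a finite sequence of segments
attached to the line, with no three pairwise intersecting segments (ω ≤ 2), and a
vertical line v such that: (1) any two segments pierced by v are disjoint, (2) every
pierced segment is attached strictly to the right of v, and (3) A uses at least k
distinct colors on the pierced segments. -/
theorem stmt11 (A : List Seg → ℕ) (hA : ProperOnline A) (k : ℕ) :
    ∃ l : List Seg,
      (∀ s ∈ l, Attached s) ∧
      (∀ i j m : Fin l.length, i ≠ j → i ≠ m → j ≠ m →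
        ¬ ((segSet (l.get i) ∩ segSet (l.get j)).Nonempty ∧
           (segSet (l.get i) ∩ segSet (l.get m)).Nonempty ∧
           (segSet (l.get j) ∩ segSet (l.get m)).Nonempty)) ∧
      ∃ v : ℝ,
        (∀ i j : Fin l.length, i ≠ j → Pierces v (l.get i) → Pierces v (l.get j) →
          Disjoint (segSet (l.get i)) (segSet (l.get j))) ∧
        (∀ i : Fin l.length, Pierces v (l.get i) → v < (l.get i).1.1) ∧
        k ≤ {c : ℕ | ∃ i : Fin l.length, Pierces v (l.get i) ∧
              A (l.take ((i : ℕ) + 1)) = c}.ncard := by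
  obtain ⟨l, z1, z2, v, g⟩ := Stmt11.main k A hA [] 0 1 1 (Stmt11.Qf k)
    (by norm_num) (by norm_num) (le_of_eq (one_mul _))
  have hinj : ∀ (a b : Fin l.length), l.get a = l.get b → a = b :=
    fun a b h => (List.Nodup.get_inj_iff g.nodup).mp h
  refine ⟨l, ?_, ?_, v, ?_, ?_, ?_⟩
  · intro s hs
    obtain ⟨h1, h2, h3⟩ := g.shape s hs
    exact ⟨h1, h2.le⟩
  · intro i j m hij him hjm
    exact g.tfree (l.get i) (l.get_mem i) (l.get j) (l.get_mem j)
      (l.get m) (l.get_mem m)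
      (fun h => hij (hinj i j h)) (fun h => him (hinj i m h)) (fun h => hjm (hinj j m h))
  · intro i j hij hpi hpj
    exact g.pdisj (l.get i) (l.get_mem i) (l.get j) (l.get_mem j)
      (fun h => hij (hinj i j h)) hpi hpj
  · intro i hpi
    have h := g.ptop (l.get i) (l.get_mem i) hpi
    linarith [h.2.2, g.hvz2]
  · have h := g.colors
    have he : Stmt11.colSet A [] l v = {c : ℕ | ∃ i : Fin l.length, Pierces v (l.get i) ∧
        A (l.take ((i : ℕ) + 1)) = c} := by
      simp [Stmt11.colSet]
    rwa [he] at h
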